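/- Let k ∈ ℂ and let x, y, z ∈ ℂ[T] be polynomials satisfying x² + y² + z² = xyz + k. Suppose deg x > deg y ≥ deg z and x is nonconstant. Then the triple (yz − x, y, z) also satisfies the equation, and deg(yz − x) < deg x (where the degree of the zero polynomial is taken to be −∞). -/

import Mathlib

open Polynomial

theorem polynomial_vieta_descent (k : ℂ) (x y z : Polynomial ℂ)
    (heq : x ^ 2 + y ^ 2 + z ^ 2 = x * y * z + C k)
    (hxy : y.degree < x.degree) (hyz : z.degree ≤ y.degree)
    (hx : 0 < x.degree) :
    (y * z - x) ^ 2 + y ^ 2 + z ^ 2 = (y * z - x) * y * z + C k ∧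
      (y * z - x).degree < x.degree := by
  refine ⟨by linear_combination heq, ?_⟩
  have hx0 : x ≠ 0 := fun h => by simp [h] at hx
  have hxw : x * (y * z - x) = y ^ 2 + z ^ 2 - C k := by linear_combination -heq
  rcases eq_or_ne (y * z - x) 0 with hw | hw
  · rw [hw, degree_zero]
    exact lt_trans (by exact_mod_cast WithBot.bot_lt_coe 0) hx
  · by_contra hcon
    push_neg at hcon
    have key : (y ^ 2 + z ^ 2 - C k).degree < x.degree + x.degree := by
      refine lt_of_le_of_lt (degree_sub_le _ _) (max_lt (lt_of_le_of_lt (degree_add_le _ _)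
        (max_lt ?_ ?_)) ?_)
      · rw [pow_two, degree_mul]
        rcases eq_or_ne y.degree ⊥ with hy | hy
        · simp only [hy, WithBot.bot_add]
          exact Ne.bot_lt (by simp [WithBot.add_eq_bot, degree_eq_bot, hx0])
        · calc y.degree + y.degree < x.degree + y.degree :=
                WithBot.add_lt_add_right hy hxy
            _ ≤ x.degree + x.degree := add_le_add_right hxy.le _
      · rw [pow_two, degree_mul]
        rcases eq_or_ne z.degree ⊥ with hz | hz
        · simp only [hz, WithBot.bot_add]
          exact Ne.bot_lt (by simp [WithBot.add_eq_bot, degree_eq_bot, hx0])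
        · calc z.degree + z.degree < x.degree + z.degree :=
                WithBot.add_lt_add_right hz (hyz.trans_lt hxy)
            _ ≤ x.degree + x.degree := add_le_add_right (hyz.trans hxy.le) _
      · refine lt_of_le_of_lt (degree_C_le) (lt_of_lt_of_le hx ?_)
        calc x.degree = x.degree + 0 := (add_zero _).symm
          _ ≤ x.degree + x.degree := add_le_add_right hx.le _
    rw [← hxw, degree_mul] at key
    exact absurd (lt_of_le_of_lt (add_le_add_right hcon _) key) (lt_irrefl _)
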